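/- arXiv:2105.14736 — 2 statements merged into one kernel-verified Lean document; each statement's English description precedes it below -/
import Mathlib

section
/- Let α > 0, λ ∈ ℂ, and t > 0. Then the function s ↦ E_{α,1}(−λ s^α) is differentiable at t with derivative d/dt E_{α,1}(−λ t^α) = −λ t^{α−1} E_{α,α}(−λ t^α). -/
open MeasureTheory Real Set

lemma fact_bound (S : ℝ) : ∀ᶠ m : ℕ in Filter.atTop, S ^ m ≤ m.factorial := by
  have h : Filter.Tendsto (fun m : ℕ => S ^ m / m.factorial) Filter.atTop (nhds 0) :=
    (Real.summable_pow_div_factorial S).tendsto_atTop_zero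
  filter_upwards [h.eventually (gt_mem_nhds (by norm_num : (0:ℝ) < 1))] with m hm
  have hf : (0:ℝ) < m.factorial := by positivity
  have := (div_lt_one hf).mp hm
  linarith

lemma gamma_ge {α : ℝ} (hα : 0 < α) (R : ℝ) (hR : 1 ≤ R) :
    ∀ᶠ k : ℕ in Filter.atTop, R ^ k ≤ Real.Gamma (k * α + 1) := by
  set S : ℝ := R ^ (2 / α) with hS
  obtain ⟨M, hM⟩ := (fact_bound S).exists_forall_of_atTop
  have htend : Filter.Tendsto (fun k : ℕ => (k : ℝ) * α) Filter.atTop Filter.atTop :=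
    Filter.Tendsto.atTop_mul_const hα tendsto_natCast_atTop_atTop
  filter_upwards [htend.eventually_ge_atTop (max 2 (M + 1))] with k hk
  have hk2 : (2:ℝ) ≤ (k:ℝ) * α := le_trans (le_max_left _ _) hk
  have hkM : (M:ℝ) + 1 ≤ (k:ℝ) * α := le_trans (le_max_right _ _) hk
  have hka : (0:ℝ) ≤ (k:ℝ) * α := by linarith
  set n : ℕ := ⌊(k:ℝ) * α⌋₊ with hn
  have hn1 : (n:ℝ) ≤ (k:ℝ) * α := Nat.floor_le hka
  have hn2 : (k:ℝ) * α < n + 1 := Nat.lt_floor_add_one _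
  have hnM : M ≤ n := by
    have h1 : (M:ℝ) < (n:ℝ) + 1 := by linarith
    exact_mod_cast Nat.lt_add_one_iff.mp (by exact_mod_cast h1)
  have hn1' : 1 ≤ n := Nat.le_floor (by push_cast; linarith)
  have hR0 : (0:ℝ) ≤ R := by linarith
  -- R^k ≤ S^n
  have h1 : R ^ k ≤ S ^ n := by
    have e1 : R ^ k = R ^ ((k:ℝ)) := (Real.rpow_natCast R k).symm
    have e2 : S ^ n = R ^ ((2 / α) * (n:ℝ)) := by
      rw [hS, ← Real.rpow_natCast S n, hS, ← Real.rpow_mul hR0]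
    rw [e1, e2]
    apply Real.rpow_le_rpow_of_exponent_le hR
    rw [div_mul_eq_mul_div, le_div_iff₀ hα]
    nlinarith
  have h2 : S ^ n ≤ n.factorial := hM n hnM
  have h3 : (n.factorial : ℝ) = Real.Gamma ((n:ℝ) + 1) :=
    (Real.Gamma_nat_eq_factorial n).symm
  have h4 : Real.Gamma ((n:ℝ) + 1) ≤ Real.Gamma ((k:ℝ) * α + 1) := by
    apply Real.Gamma_strictMonoOn_Ici.monotoneOn
    · simp only [mem_Ici]
      have : (1:ℝ) ≤ (n:ℝ) := by exact_mod_cast hn1'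
      linarith
    · simp only [mem_Ici]; linarith
    · linarith
  linarith

lemma S1 {α : ℝ} (hα : 0 < α) (x : ℝ) (hx : 0 ≤ x) :
    Summable (fun k : ℕ => ((k:ℝ) + 1) * x ^ k / Real.Gamma (k * α + 1)) := by
  set R : ℝ := 2 * x + 2 with hR
  have hR1 : (1:ℝ) ≤ R := by simp [hR]; linarith
  have hRpos : (0:ℝ) < R := by linarith
  have hg : Summable (fun k : ℕ => ((k:ℝ) + 1) * (1/2) ^ k) := by
    have h1 := summable_pow_mul_geometric_of_norm_lt_one (R := ℝ) 1
      (r := 1/2) (by norm_num)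
    have h2 := summable_geometric_of_lt_one (by norm_num : (0:ℝ) ≤ 1/2) (by norm_num)
    have := h1.add h2
    convert this using 2 with k
    · rfl
    ring
  apply summable_of_isBigO_nat hg
  apply Asymptotics.IsBigO.of_bound 1
  filter_upwards [gamma_ge hα R hR1] with k hk
  have hΓpos : (0:ℝ) < Real.Gamma (k * α + 1) :=
    lt_of_lt_of_le (by positivity) hk
  have hb1 : ((k:ℝ) + 1) * x ^ k / Real.Gamma (k * α + 1)
      ≤ ((k:ℝ) + 1) * x ^ k / R ^ k := by
    gcongr
  have hxr : x / R ≤ 1/2 := by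
    rw [div_le_div_iff₀ hRpos (by norm_num : (0:ℝ) < 2)]; linarith
  have hb2 : ((k:ℝ) + 1) * x ^ k / R ^ k ≤ ((k:ℝ) + 1) * (1/2) ^ k := by
    rw [mul_div_assoc, ← div_pow]
    exact mul_le_mul_of_nonneg_left (pow_le_pow_left₀ (by positivity) hxr k)
      (by positivity)
  have hnn : (0:ℝ) ≤ ((k:ℝ) + 1) * x ^ k / Real.Gamma (k * α + 1) := by positivity
  have hnn2 : (0:ℝ) ≤ ((k:ℝ) + 1) * (1/2) ^ k := by positivity
  simp only [norm_eq_abs, one_mul]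
  rw [abs_of_nonneg hnn, abs_of_nonneg hnn2]
  linarith

/-- The two-parameter Mittag-Leffler function `E_{α,β}(z) = ∑ₖ zᵏ / Γ(kα+β)`. -/
noncomputable def mittagLeffler (α β : ℝ) (z : ℂ) : ℂ :=
  ∑' k : ℕ, z ^ k / (Real.Gamma (k * α + β) : ℂ)

theorem stmt4 (α : ℝ) (lam : ℂ) (t : ℝ) (hα : 0 < α) (ht : 0 < t) :
    HasDerivAt (fun s : ℝ => mittagLeffler α 1 (-lam * ((s ^ α : ℝ) : ℂ)))
      (-lam * ((t ^ (α - 1) : ℝ) : ℂ) * mittagLeffler α α (-lam * ((t ^ α : ℝ) : ℂ))) t := by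
  set g : ℕ → ℝ → ℂ := fun k s =>
    (-lam * ((s ^ α : ℝ) : ℂ)) ^ k / (Real.Gamma (k * α + 1) : ℂ) with hg_def
  set G : ℕ → ℝ → ℂ := fun k s =>
    (-lam) ^ k * ((α * k * s ^ (α * k - 1) : ℝ) : ℂ) / (Real.Gamma (k * α + 1) : ℂ) with hG_def
  set u : ℕ → ℝ := fun k =>
    (2 / t * α) * (((k:ℝ) + 1) * (‖lam‖ * (t + 1) ^ α) ^ k
      / Real.Gamma (k * α + 1)) with hu_def
  have hΓpos : ∀ k : ℕ, (0:ℝ) < Real.Gamma ((k:ℝ) * α + 1) := fun k =>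
    Real.Gamma_pos_of_pos (by positivity)
  have hT : t ∈ Ioo (t/2) (t+1) := ⟨by linarith, by linarith⟩
  -- term-wise derivatives
  have hg : ∀ (k : ℕ) (s : ℝ), s ∈ Ioo (t/2) (t+1) → HasDerivAt (g k) (G k s) s := by
    intro k s hs
    have hs0 : 0 < s := lt_trans (by linarith) hs.1
    have hbase : HasDerivAt (fun y : ℝ => y ^ (α * k)) (α * k * s ^ (α * k - 1)) s :=
      Real.hasDerivAt_rpow_const (Or.inl hs0.ne')
    have h2 : HasDerivAt (fun y : ℝ => ((y ^ (α * k) : ℝ) : ℂ))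
        ((α * k * s ^ (α * k - 1) : ℝ) : ℂ) s := hbase.ofReal_comp
    have h3 := h2.const_mul ((-lam) ^ k / (Real.Gamma ((k:ℝ) * α + 1) : ℂ))
    have heq : (fun y : ℝ => (-lam) ^ k / (Real.Gamma ((k:ℝ) * α + 1) : ℂ)
        * ((y ^ (α * k) : ℝ) : ℂ)) =ᶠ[nhds s] g k := by
      filter_upwards [Ioi_mem_nhds hs0] with y hy
      have hy0 : (0:ℝ) < y := hy
      simp only [hg_def]
      rw [mul_pow, ← Complex.ofReal_pow, ← Real.rpow_natCast (y ^ α) k,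
        ← Real.rpow_mul hy0.le]
      ring
    have h4 := h3.congr_of_eventuallyEq heq.symm
    convert h4 using 1
    · rfl
    simp only [hG_def]
    ring
  -- norm bound on the derivatives
  have hb : ∀ (k : ℕ) (s : ℝ), s ∈ Ioo (t/2) (t+1) → ‖G k s‖ ≤ u k := by
    intro k s hs
    have hs0 : 0 < s := lt_trans (by linarith) hs.1
    have e : ‖G k s‖ = ‖lam‖ ^ k * (α * k * s ^ (α * k - 1))
        / Real.Gamma ((k:ℝ) * α + 1) := by
      simp only [hG_def, norm_div, norm_mul, norm_pow, norm_neg, Real.norm_eq_abs,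
        Complex.norm_real]
      rw [abs_of_pos hα, abs_of_nonneg (Nat.cast_nonneg (α := ℝ) k),
        abs_of_pos (Real.rpow_pos_of_pos hs0 _),
        abs_of_pos (hΓpos k)]
    have h1 : s ^ (α * k - 1) ≤ (t + 1) ^ (α * k) * (2 / t) := by
      rw [Real.rpow_sub hs0, Real.rpow_one, div_eq_mul_one_div]
      have h2 : s ^ (α * (k:ℝ)) ≤ (t + 1) ^ (α * (k:ℝ)) :=
        Real.rpow_le_rpow hs0.le (by linarith [hs.2]) (by positivity)
      have h3 : 1 / s ≤ 2 / t := by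
        rw [div_le_div_iff₀ hs0 ht]; linarith [hs.1]
      exact mul_le_mul h2 h3 (by positivity) (by positivity)
    have e2 : ((t + 1) ^ α) ^ k = (t + 1) ^ (α * (k:ℝ)) := by
      rw [← Real.rpow_natCast ((t+1) ^ α) k, ← Real.rpow_mul (by linarith)]
    have key : ‖lam‖ ^ k * (α * k * s ^ (α * k - 1))
        ≤ (2 / t * α) * (((k:ℝ) + 1) * (‖lam‖ * (t + 1) ^ α) ^ k) := by
      rw [mul_pow, e2]
      have hc1 : (0:ℝ) ≤ ‖lam‖ ^ k := by positivity
      have hc2 : α * (k:ℝ) * s ^ (α * k - 1)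
          ≤ α * ((k:ℝ) + 1) * ((t + 1) ^ (α * (k:ℝ)) * (2 / t)) := by
        have hk1 : α * (k:ℝ) ≤ α * ((k:ℝ) + 1) := by nlinarith
        have := mul_le_mul hk1 h1 (by positivity) (by positivity)
        exact this
      calc ‖lam‖ ^ k * (α * k * s ^ (α * k - 1))
          ≤ ‖lam‖ ^ k * (α * ((k:ℝ) + 1) * ((t + 1) ^ (α * (k:ℝ)) * (2 / t))) :=
            mul_le_mul_of_nonneg_left hc2 hc1
        _ = (2 / t * α) * (((k:ℝ) + 1) * (‖lam‖ ^ k * (t + 1) ^ (α * (k:ℝ)))) := by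
            ring
    calc ‖G k s‖
        = ‖lam‖ ^ k * (α * k * s ^ (α * k - 1)) / Real.Gamma ((k:ℝ) * α + 1) := e
      _ ≤ (2 / t * α) * (((k:ℝ) + 1) * (‖lam‖ * (t + 1) ^ α) ^ k)
          / Real.Gamma ((k:ℝ) * α + 1) := (div_le_div_iff_of_pos_right (hΓpos k)).mpr key
      _ = u k := by simp only [hu_def]; ring
  -- summability of the bound
  have hu : Summable u := by
    have hX : (0:ℝ) ≤ ‖lam‖ * (t + 1) ^ α := by positivity
    exact (S1 hα _ hX).mul_left (2 / t * α)
  -- summability at the base point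
  have hg0 : Summable (fun k => g k t) := by
    apply Summable.of_norm
    have hX : (0:ℝ) ≤ ‖lam‖ * t ^ α := by positivity
    refine Summable.of_nonneg_of_le (fun k => norm_nonneg _) (fun k => ?_) (S1 hα _ hX)
    have e : ‖g k t‖ = (‖lam‖ * t ^ α) ^ k / Real.Gamma ((k:ℝ) * α + 1) := by
      simp only [hg_def, norm_div, norm_mul, norm_pow, norm_neg, Real.norm_eq_abs,
        Complex.norm_real]
      rw [abs_of_pos (Real.rpow_pos_of_pos ht α), abs_of_pos (hΓpos k)]
    rw [e]
    apply (div_le_div_iff_of_pos_right (hΓpos k)).mpr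
    nlinarith [pow_nonneg hX k, Nat.cast_nonneg (α := ℝ) k]
  -- the series of derivatives is summable
  have hsum' : Summable (fun k => G k t) :=
    Summable.of_norm_bounded hu (fun k => hb k t hT)
  have key : HasDerivAt (fun z : ℝ => ∑' k, g k z) (∑' k, G k t) t :=
    hasDerivAt_tsum_of_isPreconnected hu isOpen_Ioo
      (convex_Ioo (t/2) (t+1)).isPreconnected hg hb hT hg0 hT
  -- identify the sum of derivatives with the claimed derivative
  have hderiv : (∑' k, G k t)
      = -lam * ((t ^ (α - 1) : ℝ) : ℂ) * mittagLeffler α α (-lam * ((t ^ α : ℝ) : ℂ)) := by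
    rw [hsum'.tsum_eq_zero_add]
    have h0 : G 0 t = 0 := by
      simp [hG_def]
    rw [h0, zero_add]
    rw [show mittagLeffler α α (-lam * ((t ^ α : ℝ) : ℂ))
      = ∑' k : ℕ, (-lam * ((t ^ α : ℝ) : ℂ)) ^ k / (Real.Gamma (k * α + α) : ℂ) from rfl,
      ← tsum_mul_left]
    apply tsum_congr
    intro k
    have hΓpos' : (0:ℝ) < Real.Gamma ((k:ℝ) * α + α) :=
      Real.Gamma_pos_of_pos (by positivity)
    have hΓr : Real.Gamma (((k:ℝ) + 1) * α + 1)
        = ((k:ℝ) * α + α) * Real.Gamma ((k:ℝ) * α + α) := by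
      rw [show ((k:ℝ) + 1) * α + 1 = ((k:ℝ) * α + α) + 1 by ring,
        Real.Gamma_add_one (by positivity)]
    have ht1 : t ^ (α * ((k:ℝ) + 1) - 1) = t ^ (α - 1) * (t ^ α) ^ k := by
      rw [← Real.rpow_natCast (t ^ α) k, ← Real.rpow_mul ht.le, ← Real.rpow_add ht]
      ring_nf
    have hΓne : ((Real.Gamma ((k:ℝ) * α + α) : ℝ) : ℂ) ≠ 0 := by
      exact_mod_cast hΓpos'.ne'
    have hne2 : (((k:ℝ) * α + α : ℝ) : ℂ) ≠ 0 := by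
      have : (0:ℝ) < (k:ℝ) * α + α := by positivity
      exact_mod_cast this.ne'
    have hne : ((k:ℝ) * α + α) ≠ 0 := by positivity
    have hreal : α * ((k:ℝ) + 1) * t ^ (α * ((k:ℝ) + 1) - 1)
        / Real.Gamma (((k:ℝ) + 1) * α + 1)
        = (t ^ (α - 1) * (t ^ α) ^ k) / Real.Gamma ((k:ℝ) * α + α) := by
      rw [hΓr, ht1]
      field_simp
    simp only [hG_def, Nat.cast_add, Nat.cast_one]
    rw [mul_div_assoc, ← Complex.ofReal_div, hreal, Complex.ofReal_div]
    push_cast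
    ring
  rw [← hderiv]
  exact key
end

section
/- Let α ∈ (0,1), λ > 0, and t > 0. Then (1/Γ(1−α)) ∫₀^t η^{α−1} E_{α,α}(−λ η^α) (t−η)^{−α} dη = E_{α,1}(−λ t^α). -/
open MeasureTheory Real Set

lemma summable_ml_aux {a : ℝ} (ha : 0 < a) {x : ℝ} (hx : 0 ≤ x) :
    Summable (fun k : ℕ => x ^ k / Real.Gamma (k * a + 1)) := by
  set M : ℝ := (max x 1) ^ a⁻¹ with hM
  have hmax1 : (1:ℝ) ≤ max x 1 := le_max_right x 1
  have hM1 : 1 ≤ M := Real.one_le_rpow hmax1 (by positivity)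
  have hM0 : 0 ≤ M := le_trans zero_le_one hM1
  have hMa : M ^ a = max x 1 := by
    rw [hM, ← Real.rpow_mul (by positivity), inv_mul_cancel₀ ha.ne', Real.rpow_one]
  obtain ⟨C, hC⟩ : ∃ C : ℝ, ∀ n : ℕ, (2*M)^n / n.factorial ≤ C := by
    have hs := Real.summable_pow_div_factorial (2*M)
    obtain ⟨C, hC⟩ := hs.tendsto_atTop_zero.bddAbove_range
    exact ⟨C, fun n => hC ⟨n, rfl⟩⟩
  have hC0 : 0 < C := lt_of_lt_of_le one_pos (by simpa using hC 0)
  set r : ℝ := (1/2 : ℝ) ^ a with hr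
  have hr0 : 0 < r := Real.rpow_pos_of_pos (by norm_num) a
  have hr1 : r < 1 := Real.rpow_lt_one (by norm_num) (by norm_num) ha
  set K : ℕ := ⌈a⁻¹⌉₊ with hK
  rw [← summable_nat_add_iff K]
  have key : ∀ n : ℕ, x ^ (n + K) / Real.Gamma ((n + K : ℕ) * a + 1)
      ≤ (2 * M * C * r ^ K) * r ^ n := by
    intro n
    set k : ℕ := n + K with hk
    have hka : (1:ℝ) ≤ k * a := by
      have h1 : (a⁻¹ : ℝ) ≤ (K : ℝ) := Nat.le_ceil _
      have h2 : (K : ℝ) ≤ (k : ℝ) := by exact_mod_cast Nat.le_add_left K n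
      calc (1:ℝ) = a⁻¹ * a := by field_simp
        _ ≤ (k:ℝ) * a := by nlinarith
    have hka0 : (0:ℝ) ≤ (k:ℝ) * a := by linarith
    set m : ℕ := ⌊(k : ℝ) * a⌋₊ with hm
    have hm1 : 1 ≤ m := Nat.one_le_floor_iff _ |>.mpr hka
    have hmle : (m : ℝ) ≤ (k:ℝ) * a := Nat.floor_le hka0
    have hlt : (k:ℝ) * a < m + 1 := Nat.lt_floor_add_one _
    have hgt : (k:ℝ) * a - 1 < m := by
      have := Nat.sub_one_lt_floor ((k:ℝ) * a)
      simpa [hm] using this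
    have hGam : (m.factorial : ℝ) ≤ Real.Gamma ((k:ℝ) * a + 1) := by
      rw [← Real.Gamma_nat_eq_factorial]
      have h2 : (2:ℝ) ≤ (m:ℝ) + 1 := by exact_mod_cast Nat.succ_le_succ hm1
      apply Real.Gamma_strictMonoOn_Ici.monotoneOn
      · simpa only [mem_Ici] using h2
      · simp only [mem_Ici]; linarith
      · push_cast; linarith
    have hGam0 : (0:ℝ) < (m.factorial : ℝ) := by positivity
    have hGamPos : (0:ℝ) < Real.Gamma ((k:ℝ) * a + 1) := lt_of_lt_of_le hGam0 hGam
    have hnum : x ^ k ≤ M ^ (m + 1) := by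
      calc x ^ k ≤ (max x 1) ^ k := pow_le_pow_left₀ hx (le_max_left x 1) k
        _ = (max x 1) ^ (k : ℝ) := by rw [Real.rpow_natCast]
        _ = (M ^ a) ^ (k : ℝ) := by rw [hMa]
        _ = M ^ ((k:ℝ) * a) := by
            rw [← Real.rpow_mul hM0, mul_comm]
        _ ≤ M ^ ((m:ℝ) + 1) := Real.rpow_le_rpow_of_exponent_le hM1 (by linarith)
        _ = M ^ (m + 1) := by rw [← Real.rpow_natCast M (m+1)]; push_cast; ring_nf
    have hhalf : ((1:ℝ)/2) ^ m ≤ 2 * r ^ k := by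
      have h1 : ((1:ℝ)/2) ^ m = ((1:ℝ)/2) ^ (m : ℝ) := by rw [Real.rpow_natCast]
      have h2 : ((1:ℝ)/2) ^ (m:ℝ) ≤ ((1:ℝ)/2) ^ ((k:ℝ)*a - 1) :=
        Real.rpow_le_rpow_of_exponent_ge (by norm_num) (by norm_num) (le_of_lt hgt)
      have h3 : ((1:ℝ)/2) ^ ((k:ℝ)*a - 1) = 2 * r ^ k := by
        rw [Real.rpow_sub (by norm_num), Real.rpow_one, hr, ← Real.rpow_natCast ((1/2:ℝ)^a),
          ← Real.rpow_mul (by norm_num), mul_comm a (k:ℝ)]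
        ring
      linarith
    have hfac : M ^ m / (m.factorial : ℝ) ≤ C * (1/2) ^ m := by
      have h := hC m
      have h2 : (2*M)^m = 2^m * M^m := mul_pow 2 M m
      rw [div_le_iff₀ hGam0] at h ⊢
      rw [h2] at h
      have h20 : (0:ℝ) < 2 ^ m := by positivity
      have : M ^ m ≤ C * (m.factorial:ℝ) / 2^m := by
        rw [le_div_iff₀ h20]; nlinarith [pow_nonneg hM0 m]
      calc M ^ m ≤ C * (m.factorial:ℝ) / 2^m := this
        _ = C * (1/2)^m * (m.factorial:ℝ) := by rw [div_pow, one_pow]; ring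
    have hxk0 : (0:ℝ) ≤ x ^ k := by positivity
    calc x ^ k / Real.Gamma ((k:ℝ) * a + 1) ≤ M ^ (m+1) / (m.factorial : ℝ) :=
          div_le_div₀ (by positivity) hnum hGam0 hGam
      _ = M * (M ^ m / (m.factorial : ℝ)) := by rw [pow_succ]; ring
      _ ≤ M * (C * (1/2)^m) := by
          apply mul_le_mul_of_nonneg_left hfac hM0
      _ ≤ M * (C * (2 * r ^ k)) := by
          apply mul_le_mul_of_nonneg_left ?_ hM0
          exact mul_le_mul_of_nonneg_left hhalf hC0.le
      _ = (2 * M * C * r ^ K) * r ^ n := by rw [hk, pow_add]; ring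
  apply Summable.of_nonneg_of_le ?_ key
  · exact ((summable_geometric_of_lt_one hr0.le hr1).mul_left _)
  · intro n
    have : (0:ℝ) < Real.Gamma ((n + K : ℕ) * a + 1) := by
      apply Real.Gamma_pos_of_pos; positivity
    positivity

lemma betaScaled_integrable {s v : ℂ} (hs : 0 < s.re) (hv : 0 < v.re) {a : ℝ} (ha : 0 < a) :
    IntervalIntegrable (fun x : ℝ => (x:ℂ) ^ (s - 1) * ((a:ℂ) - x) ^ (v - 1)) volume 0 a := by
  have h0 := Complex.betaIntegral_convergent hs hv
  have h1 := (h0.comp_mul_left (c := a⁻¹) enorm_ne_top enorm_ne_top)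
  rw [zero_div, one_div, inv_inv] at h1
  -- h1 : IntervalIntegrable (fun x => (↑(a⁻¹*x))^(s-1) * (1-↑(a⁻¹*x))^(v-1)) volume 0 a
  have h2 := (h1.const_mul ((a:ℂ)^(s-1) * (a:ℂ)^(v-1)))
  rw [intervalIntegrable_iff] at h2 ⊢
  apply h2.congr_fun ?_ measurableSet_uIoc
  intro x hx
  rw [uIoc_of_le ha.le] at hx
  have hx0 : 0 < x := hx.1
  have hxa : x ≤ a := hx.2
  have ha' : (a:ℂ) ≠ 0 := Complex.ofReal_ne_zero.mpr ha.ne'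
  have e1 : (x:ℂ) ^ (s-1) = (a:ℂ)^(s-1) * ((a⁻¹ * x : ℝ):ℂ)^(s-1) := by
    rw [← Complex.mul_cpow_ofReal_nonneg ha.le (by positivity)]
    congr 1
    push_cast
    field_simp
  have e2 : ((a:ℂ) - x) ^ (v-1) = (a:ℂ)^(v-1) * ((1:ℂ) - ((a⁻¹ * x : ℝ):ℂ))^(v-1) := by
    have hnn : (0:ℝ) ≤ 1 - a⁻¹ * x := by
      rw [sub_nonneg]
      rw [inv_mul_le_iff₀ ha]
      simpa using hxa
    have : (1:ℂ) - ((a⁻¹ * x : ℝ):ℂ) = ((1 - a⁻¹ * x : ℝ):ℂ) := by push_cast; ring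
    rw [this, ← Complex.mul_cpow_ofReal_nonneg ha.le hnn]
    congr 1
    push_cast
    field_simp
  show _ = (x:ℂ) ^ (s-1) * ((a:ℂ) - x) ^ (v-1)
  rw [e1, e2]
  ring

noncomputable def Fa (α lam t : ℝ) (k : ℕ) (η : ℝ) : ℂ :=
  ((η ^ (α - 1) : ℝ) : ℂ) * ((-(lam : ℂ) * ((η ^ α : ℝ) : ℂ)) ^ k /
    (Real.Gamma (k * α + α) : ℂ)) * (((t - η) ^ (-α) : ℝ) : ℂ)

noncomputable def Ha (α t : ℝ) (k : ℕ) (η : ℝ) : ℂ :=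
  (η:ℂ) ^ (((k * α + α : ℝ):ℂ) - 1) * ((t:ℂ) - η) ^ (((1 - α : ℝ):ℂ) - 1)

lemma step_eqOn {α lam t : ℝ} (hα : α ∈ Set.Ioo (0:ℝ) 1) (ht : 0 < t) (k : ℕ)
    {η : ℝ} (hη : η ∈ Ioc 0 t) :
    Fa α lam t k η = ((-(lam:ℂ))^k / ((Real.Gamma (k*α+α) : ℝ) : ℂ)) * Ha α t k η := by
  obtain ⟨hη0, hηt⟩ := hη
  have e0 : ((η ^ α : ℝ):ℂ) ^ k = ((η ^ (α * k) : ℝ):ℂ) := by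
    rw [← Complex.ofReal_pow, ← Real.rpow_natCast (η ^ α) k, ← Real.rpow_mul hη0.le]
  have ha1 : ((η ^ (α-1) : ℝ):ℂ) * ((η ^ (α * k) : ℝ):ℂ) = (η:ℂ) ^ (((k * α + α : ℝ):ℂ) - 1) := by
    rw [← Complex.ofReal_mul, ← Real.rpow_add hη0]
    rw [show (α - 1) + α * (k:ℝ) = (k*α+α) - 1 by ring]
    rw [Complex.ofReal_cpow hη0.le]
    congr 1
    push_cast
    ring
  have hb : (((t - η) ^ (-α) : ℝ):ℂ) = ((t:ℂ) - η) ^ (((1 - α : ℝ):ℂ) - 1) := by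
    rw [Complex.ofReal_cpow (by linarith : (0:ℝ) ≤ t - η)]
    congr 1 <;> push_cast <;> ring
  rw [Fa, Ha, mul_pow, e0, ← ha1, hb]
  ring

lemma sre {α : ℝ} (hα : α ∈ Set.Ioo (0:ℝ) 1) (k : ℕ) : 0 < (((k * α + α : ℝ):ℂ)).re := by
  rw [Complex.ofReal_re]; have := hα.1; positivity

lemma vre {α : ℝ} (hα : α ∈ Set.Ioo (0:ℝ) 1) : 0 < (((1 - α : ℝ):ℂ)).re := by
  rw [Complex.ofReal_re]; have := hα.2; linarith

lemma step_Hint {α t : ℝ} (hα : α ∈ Set.Ioo (0:ℝ) 1) (ht : 0 < t) (k : ℕ) :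
    IntegrableOn (Ha α t k) (Ioc 0 t) := by
  have h := betaScaled_integrable (sre hα k) (vre hα) ht
  rw [intervalIntegrable_iff, uIoc_of_le ht.le] at h
  exact h

lemma step_Hval {α t : ℝ} (hα : α ∈ Set.Ioo (0:ℝ) 1) (ht : 0 < t) (k : ℕ) :
    ∫ η in Ioc 0 t, Ha α t k η =
      (((t ^ (k*α) : ℝ) * (Real.Gamma (k*α+α) * Real.Gamma (1-α) / Real.Gamma (k*α+1)) : ℝ) : ℂ) := by
  have h1 : ∫ η in Ioc 0 t, Ha α t k η = ∫ η in (0:ℝ)..t, Ha α t k η :=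
    (intervalIntegral.integral_of_le ht.le).symm
  rw [h1]
  have h2 := Complex.betaIntegral_scaled ((k * α + α : ℝ):ℂ) ((1 - α : ℝ):ℂ) ht
  simp only [Ha]
  rw [h2]
  have hsv : ((k * α + α : ℝ):ℂ) + ((1 - α : ℝ):ℂ) = ((k*α+1 : ℝ):ℂ) := by push_cast; ring
  have hbeta : Complex.betaIntegral ((k * α + α : ℝ):ℂ) ((1 - α : ℝ):ℂ) =
      ((Real.Gamma (k*α+α) * Real.Gamma (1-α) / Real.Gamma (k*α+1) : ℝ) : ℂ) := by
    have h3 := Complex.Gamma_mul_Gamma_eq_betaIntegral (sre hα k) (vre hα)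
    rw [hsv] at h3
    have hne2 : ((Real.Gamma (k*α+1) : ℝ):ℂ) ≠ 0 := by
      exact_mod_cast (Real.Gamma_pos_of_pos (by have := hα.1; positivity : (0:ℝ) < k*α+1)).ne'
    simp only [Complex.Gamma_ofReal] at h3
    rw [Complex.ofReal_div, Complex.ofReal_mul, eq_div_iff hne2, mul_comm]
    exact h3.symm
  rw [hbeta]
  have hexp : ((k * α + α : ℝ):ℂ) + ((1 - α : ℝ):ℂ) - 1 = ((k*α : ℝ):ℂ) := by push_cast; ring
  rw [hexp, ← Complex.ofReal_cpow ht.le]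
  push_cast
  ring

lemma step_Fint {α lam t : ℝ} (hα : α ∈ Set.Ioo (0:ℝ) 1) (ht : 0 < t) (k : ℕ) :
    IntegrableOn (Fa α lam t k) (Ioc 0 t) := by
  apply (((step_Hint hα ht k).const_mul ((-(lam:ℂ))^k / ((Real.Gamma (k*α+α) : ℝ) : ℂ))).congr ?_)
  filter_upwards [ae_restrict_mem measurableSet_Ioc] with η hη
  exact (step_eqOn hα ht k hη).symm

lemma step_Fval {α lam t : ℝ} (hα : α ∈ Set.Ioo (0:ℝ) 1) (ht : 0 < t) (k : ℕ) :
    ∫ η in Ioc 0 t, Fa α lam t k η =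
      (-(lam:ℂ))^k * ((t ^ (k*α) : ℝ):ℂ) * ((Real.Gamma (1-α) : ℝ):ℂ) /
        ((Real.Gamma (k*α+1) : ℝ):ℂ) := by
  rw [setIntegral_congr_fun measurableSet_Ioc (fun η hη => step_eqOn hα ht k hη)]
  rw [MeasureTheory.integral_const_mul, step_Hval hα ht k]
  have hG : ((Real.Gamma (k*α+α) : ℝ):ℂ) ≠ 0 := by
    exact_mod_cast (Real.Gamma_pos_of_pos (by have := hα.1; positivity : (0:ℝ) < k*α+α)).ne'
  have hG1 : ((Real.Gamma (k*α+1) : ℝ):ℂ) ≠ 0 := by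
    exact_mod_cast (Real.Gamma_pos_of_pos (by have := hα.1; positivity : (0:ℝ) < k*α+1)).ne'
  push_cast
  field_simp
  ring_nf
  have hG' : ((Real.Gamma (α + α * k) : ℝ) : ℂ) ≠ 0 := by
    exact_mod_cast (Real.Gamma_pos_of_pos (by have := hα.1; positivity : (0:ℝ) < α + α * k)).ne'
  generalize ((Real.Gamma (α + α * k) : ℝ) : ℂ) = X at hG' ⊢
  field_simp

lemma step_norm {α lam t : ℝ} (hα : α ∈ Set.Ioo (0:ℝ) 1) (hlam : 0 < lam) (ht : 0 < t) (k : ℕ) :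
    ∫ η in Ioc 0 t, ‖Fa α lam t k η‖ =
      Real.Gamma (1-α) * ((lam * t^α)^k / Real.Gamma (k*α+1)) := by
  have hGk : (0:ℝ) < Real.Gamma (k*α+α) :=
    Real.Gamma_pos_of_pos (by have := hα.1; positivity)
  have hG1 : (0:ℝ) < Real.Gamma (k*α+1) :=
    Real.Gamma_pos_of_pos (by have := hα.1; positivity)
  have h1 : ∫ η in Ioc 0 t, ‖Fa α lam t k η‖
      = ∫ η in Ioc 0 t, (lam^k / Real.Gamma (k*α+α)) * (Ha α t k η).re := by
    apply setIntegral_congr_fun measurableSet_Ioc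
    intro η hη
    dsimp only
    rw [step_eqOn hα ht k hη, norm_mul]
    have hre : Ha α t k η = (((η ^ (k*α+α-1) * (t-η) ^ (-α) : ℝ)):ℂ) := by
      rw [Ha, Complex.ofReal_mul, Complex.ofReal_cpow hη.1.le,
        Complex.ofReal_cpow (by linarith [hη.2] : (0:ℝ) ≤ t - η)]
      congr 1
      · congr 1
        push_cast; ring
      · congr 1 <;> push_cast <;> ring
    have hnn : (0:ℝ) ≤ η ^ (k*α+α-1) * (t-η) ^ (-α) :=
      mul_nonneg (Real.rpow_nonneg hη.1.le _) (Real.rpow_nonneg (by linarith [hη.2]) _)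
    have h2 : ‖Ha α t k η‖ = (Ha α t k η).re := by
      rw [hre, Complex.norm_real, Complex.ofReal_re, Real.norm_of_nonneg hnn]
    rw [h2]
    congr 1
    rw [norm_div, norm_pow, norm_neg, Complex.norm_real, Complex.norm_real,
      Real.norm_of_nonneg hlam.le, Real.norm_of_nonneg hGk.le]
  rw [h1, MeasureTheory.integral_const_mul]
  have h3 : ∫ η in Ioc 0 t, (Ha α t k η).re = (∫ η in Ioc 0 t, Ha α t k η).re := by
    rw [← RCLike.re_eq_complex_re, ← integral_re (step_Hint hα ht k)]
  rw [h3, step_Hval hα ht k, Complex.ofReal_re]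
  have h4 : (lam * t^α)^k = lam ^ k * t ^ (k*α) := by
    rw [mul_pow, ← Real.rpow_natCast (t^α) k, ← Real.rpow_mul ht.le, mul_comm α (k:ℝ)]
  rw [h4]
  field_simp
  ring_nf
  have hG' : Real.Gamma (α + α * k) ≠ 0 :=
    (Real.Gamma_pos_of_pos (by have := hα.1; positivity : (0:ℝ) < α + α * k)).ne'
  generalize Real.Gamma (α + α * k) = X at hG' ⊢
  field_simp

theorem stmt6 (α lam t : ℝ) (hα : α ∈ Set.Ioo (0:ℝ) 1) (hlam : 0 < lam) (ht : 0 < t) :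
    ((1 / Real.Gamma (1 - α) : ℝ) : ℂ) *
        ∫ η in (0:ℝ)..t, ((η ^ (α - 1) : ℝ) : ℂ) *
          mittagLeffler α α (-(lam : ℂ) * ((η ^ α : ℝ) : ℂ)) * (((t - η) ^ (-α) : ℝ) : ℂ)
      = mittagLeffler α 1 (-(lam : ℂ) * ((t ^ α : ℝ) : ℂ)) := by
  have hΓv : 0 < Real.Gamma (1-α) := Real.Gamma_pos_of_pos (by linarith [hα.2])
  rw [intervalIntegral.integral_of_le ht.le]
  have hpt : ∀ η : ℝ, ((η ^ (α - 1) : ℝ) : ℂ) *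
      mittagLeffler α α (-(lam:ℂ) * ((η ^ α : ℝ):ℂ)) * (((t - η) ^ (-α) : ℝ):ℂ)
      = ∑' k : ℕ, Fa α lam t k η := by
    intro η
    rw [mittagLeffler, ← tsum_mul_left, ← tsum_mul_right]
    exact tsum_congr fun k => by rw [Fa]
  have hsum : Summable (fun k : ℕ => ∫ η in Ioc 0 t, ‖Fa α lam t k η‖) := by
    have he : (fun k : ℕ => ∫ η in Ioc 0 t, ‖Fa α lam t k η‖)
        = fun k : ℕ => Real.Gamma (1-α) * ((lam * t^α)^k / Real.Gamma (k*α+1)) :=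
      funext fun k => step_norm hα hlam ht k
    rw [he]
    exact (summable_ml_aux hα.1 (by positivity)).mul_left _
  have hswap : (∫ η in Ioc 0 t, ((η ^ (α - 1) : ℝ) : ℂ) *
      mittagLeffler α α (-(lam:ℂ) * ((η ^ α : ℝ):ℂ)) * (((t - η) ^ (-α) : ℝ):ℂ))
      = ∑' k : ℕ, ∫ η in Ioc 0 t, Fa α lam t k η := by
    simp only [hpt]
    exact (integral_tsum_of_summable_integral_norm (fun k => step_Fint hα ht k) hsum).symm
  rw [hswap, ← tsum_mul_left, mittagLeffler]
  apply tsum_congr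
  intro k
  rw [step_Fval hα ht k]
  have hz : (-(lam:ℂ) * ((t^α : ℝ):ℂ))^k = (-(lam:ℂ))^k * ((t^((k:ℝ)*α) : ℝ):ℂ) := by
    rw [mul_pow, ← Complex.ofReal_pow, ← Real.rpow_natCast (t^α) k, ← Real.rpow_mul ht.le,
      mul_comm α (k:ℝ)]
  rw [hz]
  have hG1 : ((Real.Gamma (k*α+1) : ℝ):ℂ) ≠ 0 := by
    exact_mod_cast (Real.Gamma_pos_of_pos (by have := hα.1; positivity : (0:ℝ) < k*α+1)).ne'
  have hGv : ((Real.Gamma (1-α) : ℝ):ℂ) ≠ 0 := by exact_mod_cast hΓv.ne'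
  push_cast
  field_simp
end
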